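/- Let $h(x) = -x \log_2 x - (1-x)\log_2(1-x)$ for $x \in (0,1)$ with $h(0)=h(1)=0$, and define $E(x) = h\left(\frac{1+\sqrt{1-x}}{2}\right)$ for $x \in [0,1]$. Then $x \mapsto E(x)^2$ is convex on $[0,1]$: for all $x, y \in [0,1]$ and $t \in [0,1]$, $E(tx + (1-t)y)^2 \leq t\,E(x)^2 + (1-t)\,E(y)^2$. -/

import Mathlib

/-- The Shannon binary entropy `h(x) = -x log₂ x - (1-x) log₂(1-x)`.
(With Mathlib's convention `log 0 = 0`, this automatically satisfies
`h 0 = 0` and `h 1 = 0`.) -/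
noncomputable def binaryEntropy (x : ℝ) : ℝ :=
  -x * Real.logb 2 x - (1 - x) * Real.logb 2 (1 - x)

/-- Entanglement of formation as a function of the squared concurrence:
`E(x) = h((1 + √(1-x))/2)`. -/
noncomputable def eofOfSqConc (x : ℝ) : ℝ :=
  binaryEntropy ((1 + Real.sqrt (1 - x)) / 2)

open Real Set

noncomputable def auxG (s : ℝ) : ℝ := Real.binEntropy ((1 + s) / 2)
noncomputable def auxL (s : ℝ) : ℝ := Real.log (1 + s) - Real.log (1 - s)
noncomputable def auxPsi (s : ℝ) : ℝ := auxG s * auxL s / (2 * s)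
noncomputable def auxF (x : ℝ) : ℝ := Real.binEntropy ((1 + Real.sqrt (1 - x)) / 2) ^ 2


lemma aux_log_one_add_ge {s : ℝ} (h0 : 0 ≤ s) (h1 : s ≤ 1) :
    s * Real.log 2 ≤ Real.log (1 + s) := by
  have h := convexOn_exp.2 (Set.mem_univ (0:ℝ)) (Set.mem_univ (Real.log 2))
    (by linarith : (0:ℝ) ≤ 1 - s) h0 (by ring)
  simp only [smul_eq_mul, mul_zero, zero_add, Real.exp_zero, Real.exp_log (by norm_num : (0:ℝ) < 2)] at h
  have h' : Real.exp (s * Real.log 2) ≤ 1 + s := by linarith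
  calc s * Real.log 2 = Real.log (Real.exp (s * Real.log 2)) := (Real.log_exp _).symm
    _ ≤ Real.log (1 + s) := Real.log_le_log (Real.exp_pos _) h'

lemma aux_neg_log_one_sub_ge {s : ℝ} (h0 : 0 ≤ s) (h1 : s < 1) :
    s ≤ -Real.log (1 - s) := by
  have := Real.log_le_sub_one_of_pos (by linarith : (0:ℝ) < 1 - s)
  linarith

lemma aux_L_ge {s : ℝ} (h0 : 0 ≤ s) (h1 : s < 1) : 2 * s ≤ auxL s := by
  set f : ℝ → ℝ := fun s => Real.log (1 + s) - Real.log (1 - s) - 2 * s with hf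
  have hcont : ContinuousOn f (Ico 0 1) := by
    apply ContinuousOn.sub
    · apply ContinuousOn.sub
      · exact ContinuousOn.log (by fun_prop) (fun x hx => by
          have := hx.1; intro hc; nlinarith [hx.1])
      · exact ContinuousOn.log (by fun_prop) (fun x hx => by
          have := hx.2; intro hc; nlinarith [hx.2])
    · fun_prop
  have hderiv : ∀ x ∈ interior (Ico (0:ℝ) 1), HasDerivAt f (1/(1+x)*1 - 1/(1-x)*(-1) - 2) x := by
    rw [interior_Ico]
    intro x hx
    have h1 : (1:ℝ) + x ≠ 0 := by nlinarith [hx.1]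
    have h2 : (1:ℝ) - x ≠ 0 := by nlinarith [hx.2]
    have d1 : HasDerivAt (fun s : ℝ => Real.log (1 + s)) (1/(1+x)*1) x := by
      have := (Real.hasDerivAt_log h1).comp x ((hasDerivAt_id x).const_add 1)
      simpa [one_div, Function.comp_def] using this
    have d2 : HasDerivAt (fun s : ℝ => Real.log (1 - s)) (1/(1-x)*(-1)) x := by
      have := (Real.hasDerivAt_log h2).comp x ((hasDerivAt_id x).const_sub 1)
      simpa [one_div, Function.comp_def] using this
    have d3 : HasDerivAt (fun s : ℝ => 2 * s) 2 x := by
      simpa using (hasDerivAt_id x).const_mul 2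
    exact (d1.sub d2).sub d3
  have hmono : MonotoneOn f (Ico 0 1) := by
    apply monotoneOn_of_deriv_nonneg (convex_Ico 0 1) hcont
    · intro x hx
      exact ((hderiv x hx).differentiableAt).differentiableWithinAt
    · intro x hx
      rw [(hderiv x hx).deriv]
      rw [interior_Ico] at hx
      have hx0 := hx.1; have hx1 := hx.2
      have e1 : (1:ℝ) - x ≤ 1 / (1 + x) := by
        rw [le_div_iff₀ (by linarith : (0:ℝ) < 1 + x)]; nlinarith
      have e2 : (1:ℝ) + x ≤ 1 / (1 - x) := by
        rw [le_div_iff₀ (by linarith : (0:ℝ) < 1 - x)]; nlinarith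
      nlinarith
  have h0' : (0:ℝ) ∈ Ico (0:ℝ) 1 := by constructor <;> norm_num
  have hs' : s ∈ Ico (0:ℝ) 1 := ⟨h0, h1⟩
  have := hmono h0' hs' h0
  have hf0 : f 0 = 0 := by simp [hf]
  rw [hf0] at this
  simp only [hf] at this
  unfold auxL
  linarith

lemma aux_g_formula {s : ℝ} (h0 : -1 < s) (h1 : s < 1) :
    auxG s = Real.log 2 - (1+s) * Real.log (1+s) / 2 - (1-s) * Real.log (1-s) / 2 := by
  unfold auxG
  rw [Real.binEntropy]
  have h : 1 - (1 + s)/2 = (1 - s)/2 := by ring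
  rw [h, Real.log_inv, Real.log_inv,
    Real.log_div (by linarith : (1:ℝ) + s ≠ 0) (two_ne_zero),
    Real.log_div (by linarith : (1:ℝ) - s ≠ 0) (two_ne_zero)]
  ring

lemma aux_g_nonneg {s : ℝ} (h0 : 0 ≤ s) (h1 : s ≤ 1) : 0 ≤ auxG s :=
  Real.binEntropy_nonneg (by linarith) (by linarith)

/-- Core inequality, denominator-cleared form. -/
lemma aux_core {s : ℝ} (h0 : 0 < s) (h1 : s < 1) :
    auxG s * (2*s - auxL s * (1 - s^2)) ≤ s * (1 - s^2) * (auxL s)^2 / 2 := by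
  have hss : (0:ℝ) < 1 - s^2 := by nlinarith
  have hu := aux_log_one_add_ge h0.le h1.le
  have hv := aux_neg_log_one_sub_ge h0.le h1
  have hL := aux_L_ge h0.le h1
  have hg0 := aux_g_nonneg h0.le h1.le
  have hlog2 : Real.log 2 ≤ 1 := by
    have := Real.log_le_sub_one_of_pos (by norm_num : (0:ℝ) < 2); linarith
  have hgf := aux_g_formula (by linarith) h1
  set u := Real.log (1 + s) with hu'
  set v := Real.log (1 - s) with hv'
  have hLuv : auxL s = u - v := rfl
  -- K : s * g ≤ (1-s²) * L / 2
  have hK : s * auxG s ≤ (1 - s^2) * auxL s / 2 := by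
    rw [hgf, hLuv]
    nlinarith [mul_nonneg (by linarith : (0:ℝ) ≤ 1 + s) (by linarith : 0 ≤ u - s * Real.log 2),
      mul_nonneg (by linarith : (0:ℝ) ≤ 1 - s) (by linarith : 0 ≤ -v - s),
      mul_nonneg (mul_nonneg h0.le (by linarith : (0:ℝ) ≤ 1 - s)) (by linarith : 0 ≤ 1 - Real.log 2)]
  have hL0 : 0 ≤ auxL s := by linarith
  rcases le_or_gt (2*s - auxL s * (1 - s^2)) 0 with hc | hc
  · have hlhs : auxG s * (2*s - auxL s * (1 - s^2)) ≤ 0 := mul_nonpos_of_nonneg_of_nonpos hg0 hc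
    have hrhs : 0 ≤ s * (1 - s^2) * (auxL s)^2 / 2 := by positivity
    linarith
  · -- multiply hK by the positive factor
    nlinarith [mul_le_mul_of_nonneg_right hK hc.le,
      mul_nonneg (mul_nonneg hss.le hL0) (by linarith : 0 ≤ auxL s - 2*s),
      mul_pos h0 hc]

lemma aux_log_half_diff {s : ℝ} (h0 : -1 < s) (h1 : s < 1) :
    Real.log (1 - (1 + s)/2) - Real.log ((1 + s)/2) = -(auxL s) := by
  have h : 1 - (1 + s)/2 = (1 - s)/2 := by ring
  rw [h, Real.log_div (by linarith : (1:ℝ) - s ≠ 0) two_ne_zero,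
    Real.log_div (by linarith : (1:ℝ) + s ≠ 0) two_ne_zero]
  unfold auxL; ring

lemma aux_hasDerivAt_G {s : ℝ} (h0 : 0 < s) (h1 : s < 1) :
    HasDerivAt auxG (-(auxL s)/2) s := by
  have hp0 : (1 + s)/2 ≠ 0 := by intro h; rw [div_eq_zero_iff] at h; rcases h with h|h <;> norm_num at h <;> linarith
  have hp1 : (1 + s)/2 ≠ 1 := by intro h; rw [div_eq_iff (by norm_num : (2:ℝ) ≠ 0)] at h; linarith
  have hhalf : HasDerivAt (fun t : ℝ => (1 + t)/2) (1/2) s := by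
    simpa using ((hasDerivAt_id s).const_add 1).div_const 2
  have h := (Real.hasDerivAt_binEntropy hp0 hp1).comp s hhalf
  have : (Real.log (1 - (1 + s)/2) - Real.log ((1 + s)/2)) * (1/2) = -(auxL s)/2 := by
    rw [aux_log_half_diff (by linarith) h1]; ring
  rw [this] at h
  exact h

lemma aux_hasDerivAt_L {s : ℝ} (h0 : -1 < s) (h1 : s < 1) :
    HasDerivAt auxL (1/(1+s) + 1/(1-s)) s := by
  have d1 : HasDerivAt (fun t : ℝ => Real.log (1 + t)) (1/(1+s)) s := by
    have := (Real.hasDerivAt_log (by linarith : (1:ℝ) + s ≠ 0)).comp s ((hasDerivAt_id s).const_add 1)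
    simpa [one_div, Function.comp_def] using this
  have d2 : HasDerivAt (fun t : ℝ => Real.log (1 - t)) (-(1/(1-s))) s := by
    have := (Real.hasDerivAt_log (by linarith : (1:ℝ) - s ≠ 0)).comp s ((hasDerivAt_id s).const_sub 1)
    simpa [one_div, Function.comp_def] using this
  have := d1.sub d2
  have e : auxL = (fun t => Real.log (1 + t)) - fun t => Real.log (1 - t) := by funext t; rfl
  rw [e]
  simpa [sub_neg_eq_add] using this

lemma aux_hasDerivAt_Psi {s : ℝ} (h0 : 0 < s) (h1 : s < 1) :
    HasDerivAt auxPsi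
      (((-(auxL s)/2 * auxL s + auxG s * (1/(1+s) + 1/(1-s))) * (2*s)
        - auxG s * auxL s * 2) / (2*s)^2) s := by
  have hnum : HasDerivAt (fun t => auxG t * auxL t)
      (-(auxL s)/2 * auxL s + auxG s * (1/(1+s) + 1/(1-s))) s :=
    (aux_hasDerivAt_G h0 h1).mul (aux_hasDerivAt_L (by linarith) h1)
  have hden : HasDerivAt (fun t : ℝ => 2 * t) 2 s := by
    simpa using (hasDerivAt_id s).const_mul 2
  exact hnum.div hden (by positivity)

lemma aux_deriv_Psi_nonpos {s : ℝ} (h0 : 0 < s) (h1 : s < 1) :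
    deriv auxPsi s ≤ 0 := by
  rw [(aux_hasDerivAt_Psi h0 h1).deriv]
  have hss : (0:ℝ) < 1 - s^2 := by nlinarith
  have hcore := aux_core h0 h1
  apply div_nonpos_of_nonpos_of_nonneg _ (by positivity)
  have ha : (1:ℝ) + s ≠ 0 := by linarith
  have hb : (1:ℝ) - s ≠ 0 := by linarith
  have hc : (1:ℝ) - s^2 ≠ 0 := ne_of_gt hss
  have hsum : 1/(1+s) + 1/(1-s) = 2/(1-s^2) := by
    rw [div_add_div _ _ ha hb, show 1 * (1-s) + (1+s) * 1 = (2:ℝ) by ring,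
      show (1+s)*(1-s) = 1 - s^2 by ring]
  rw [hsum]
  have e : ((-(auxL s)/2 * auxL s + auxG s * (2/(1-s^2))) * (2*s)
        - auxG s * auxL s * 2) * (1 - s^2)
      = 2 * ((auxG s * (2*s - auxL s * (1 - s^2))) - s * (1 - s^2) * (auxL s)^2 / 2) := by
    field_simp
    ring
  nlinarith [e, hcore, hss]

lemma aux_antitone_Psi : AntitoneOn auxPsi (Ioo (0:ℝ) 1) := by
  apply antitoneOn_of_deriv_nonpos (convex_Ioo 0 1)
  · intro s hs
    exact ((aux_hasDerivAt_Psi hs.1 hs.2).differentiableAt).continuousAt.continuousWithinAt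
  · rw [interior_Ioo]
    intro s hs
    exact ((aux_hasDerivAt_Psi hs.1 hs.2).differentiableAt).differentiableWithinAt
  · rw [interior_Ioo]
    intro s hs
    exact aux_deriv_Psi_nonpos hs.1 hs.2

lemma aux_hasDerivAt_F {x : ℝ} (h0 : 0 < x) (h1 : x < 1) :
    HasDerivAt auxF (auxPsi (Real.sqrt (1 - x))) x := by
  have h1x : (0:ℝ) < 1 - x := by linarith
  set s := Real.sqrt (1 - x) with hs
  have hs0 : 0 < s := Real.sqrt_pos.2 h1x
  have hs2 : s^2 = 1 - x := Real.sq_sqrt h1x.le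
  have hs1 : s < 1 := by nlinarith
  have hp0 : (1 + s)/2 ≠ 0 := by intro h; rw [div_eq_zero_iff] at h; rcases h with h|h <;> norm_num at h <;> linarith
  have hp1 : (1 + s)/2 ≠ 1 := by intro h; rw [div_eq_iff (by norm_num : (2:ℝ) ≠ 0)] at h; linarith
  have d1 : HasDerivAt (fun y : ℝ => 1 - y) (-1) x := (hasDerivAt_id x).const_sub 1
  have d2 : HasDerivAt (fun y : ℝ => Real.sqrt (1 - y)) (1/(2*s) * (-1)) x :=
    (Real.hasDerivAt_sqrt (ne_of_gt h1x)).comp x d1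
  have d3 : HasDerivAt (fun y : ℝ => (1 + Real.sqrt (1 - y))/2) ((1/(2*s) * (-1))/2) x :=
    (d2.const_add 1).div_const 2
  have d4 : HasDerivAt (fun y : ℝ => Real.binEntropy ((1 + Real.sqrt (1 - y))/2))
      ((Real.log (1 - (1+s)/2) - Real.log ((1+s)/2)) * ((1/(2*s) * (-1))/2)) x :=
    by have := (Real.hasDerivAt_binEntropy hp0 hp1).comp x d3; exact this
  have d5 := d4.pow 2
  have e : (↑2 : ℝ) * Real.binEntropy ((1 + s)/2) ^ (2-1)
      * ((Real.log (1 - (1+s)/2) - Real.log ((1+s)/2)) * ((1/(2*s) * (-1))/2))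
      = auxPsi s := by
    rw [aux_log_half_diff (by linarith) hs1]
    unfold auxPsi auxG
    field_simp
    ring
  rw [show ((2:ℕ):ℝ) = (2:ℝ) from rfl] at d5
  rw [e] at d5
  exact d5

lemma aux_convexOn_F : ConvexOn ℝ (Icc (0:ℝ) 1) auxF := by
  apply MonotoneOn.convexOn_of_deriv (convex_Icc 0 1)
  · unfold auxF
    fun_prop
  · rw [interior_Icc]
    intro x hx
    exact ((aux_hasDerivAt_F hx.1 hx.2).differentiableAt).differentiableWithinAt
  · rw [interior_Icc]
    intro a ha b hb hab
    rw [(aux_hasDerivAt_F ha.1 ha.2).deriv, (aux_hasDerivAt_F hb.1 hb.2).deriv]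
    have hmem : ∀ {z : ℝ}, 0 < z → z < 1 → Real.sqrt (1 - z) ∈ Ioo (0:ℝ) 1 := by
      intro z hz0 hz1
      have h1z : (0:ℝ) < 1 - z := by linarith
      have h2 : Real.sqrt (1-z) ^ 2 = 1 - z := Real.sq_sqrt h1z.le
      constructor
      · exact Real.sqrt_pos.2 h1z
      · nlinarith [Real.sqrt_nonneg (1-z)]
    exact aux_antitone_Psi (hmem hb.1 hb.2) (hmem ha.1 ha.2)
      (Real.sqrt_le_sqrt (by linarith))

lemma binaryEntropy_eq (y : ℝ) :
    binaryEntropy y = Real.binEntropy y / Real.log 2 := by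
  unfold binaryEntropy
  rw [Real.binEntropy, Real.log_inv, Real.log_inv, Real.logb, Real.logb]
  ring

theorem sq_eofOfSqConc_convexOn :
    ∀ x y t : ℝ, x ∈ Set.Icc (0:ℝ) 1 → y ∈ Set.Icc (0:ℝ) 1 → t ∈ Set.Icc (0:ℝ) 1 →
      eofOfSqConc (t * x + (1 - t) * y) ^ 2 ≤
        t * eofOfSqConc x ^ 2 + (1 - t) * eofOfSqConc y ^ 2 := by
  intro x y t hx hy ht
  have key := aux_convexOn_F.2 hx hy ht.1 (by linarith [ht.2] : (0:ℝ) ≤ 1 - t) (by ring)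
  simp only [smul_eq_mul] at key
  have he : ∀ z : ℝ, eofOfSqConc z ^ 2 = auxF z / Real.log 2 ^ 2 := by
    intro z
    rw [eofOfSqConc, binaryEntropy_eq, div_pow]
    rfl
  rw [he, he, he]
  have hc : (0:ℝ) < Real.log 2 ^ 2 := by
    have := Real.log_pos (by norm_num : (1:ℝ) < 2)
    positivity
  rw [show t * (auxF x / Real.log 2 ^ 2) + (1 - t) * (auxF y / Real.log 2 ^ 2)
      = (t * auxF x + (1 - t) * auxF y) / Real.log 2 ^ 2 by ring]
  exact div_le_div_of_nonneg_right key hc.le
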